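/- arXiv:2005.01949 — 3 statements merged into one kernel-verified Lean document; each statement's English description precedes it below -/
import Mathlib

section
/- If {T_i, 1 ≤ i ≤ n} is a non-negative supermartingale, then for any 0 < α < 1, E[max_{1≤i≤n} T_i^α] ≤ (E[T_1])^α / (1 − α). -/
open MeasureTheory Finset
open scoped NNReal ENNReal

lemma super_smul_le {Ω : Type*} {m : MeasurableSpace Ω} {μ : Measure Ω} [IsFiniteMeasure μ]
    {ℱ : Filtration ℕ m} {f : ℕ → Ω → ℝ} (hf : Supermartingale f ℱ μ)
    (hnn : ∀ k, 0 ≤ᵐ[μ] f k) (ε : ℝ≥0) (N : ℕ) :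
    ε • μ {ω | (ε : ℝ) ≤ (range (N + 1)).sup' nonempty_range_add_one fun k => f k ω} ≤
      ENNReal.ofReal (∫ ω, f 0 ω ∂μ) := by
  set τ : Ω → ℕ := hittingBtwn f {y : ℝ | ↑ε ≤ y} 0 N with hτdef
  have hτ : IsStoppingTime ℱ (fun ω => (τ ω : WithTop ℕ)) :=
    hf.stronglyAdapted.adapted.isStoppingTime_hittingBtwn measurableSet_Ici
  have hτle : ∀ ω, τ ω ≤ N := fun ω => hittingBtwn_le ω
  have hint_sv : Integrable (stoppedValue f (fun ω => (τ ω : WithTop ℕ))) μ :=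
    integrable_stoppedValue ℕ hτ hf.integrable (N := N) fun ω => WithTop.coe_le_coe.2 (hτle ω)
  have hmble : Measurable fun ω => (range (N + 1)).sup' nonempty_range_add_one fun k => f k ω :=
    Finset.measurable_range_sup'' fun k _ => ((hf.stronglyAdapted k).measurable).le (ℱ.le k)
  have hval : ∀ ω, ((ε : ℝ) ≤ (range (N + 1)).sup' nonempty_range_add_one fun k => f k ω) →
      (ε : ℝ) ≤ stoppedValue f (fun ω => (τ ω : WithTop ℕ)) ω := by
    intro x hx
    simp_rw [le_sup'_iff, Finset.mem_range, Nat.lt_succ_iff] at hx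
    refine stoppedValue_hittingBtwn_mem ?_
    obtain ⟨j, hj₁, hj₂⟩ := hx
    exact ⟨j, ⟨Nat.zero_le _, hj₁⟩, hj₂⟩
  have h1 := setIntegral_ge_of_const_le_real (measurableSet_le measurable_const hmble)
      (measure_ne_top _ _) hval hint_sv.integrableOn
  have hnn_sv : 0 ≤ᵐ[μ] stoppedValue f (fun ω => (τ ω : WithTop ℕ)) := by
    have h := ae_all_iff.2 hnn
    filter_upwards [h] with ω hω
    exact hω (τ ω)
  have h2 := setIntegral_le_integral (s := {ω | (ε : ℝ) ≤
      (range (N + 1)).sup' nonempty_range_add_one fun k => f k ω}) hint_sv hnn_sv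
  have h3 : ∫ ω, stoppedValue f (fun ω => (τ ω : WithTop ℕ)) ω ∂μ ≤ ∫ ω, f 0 ω ∂μ := by
    have hneg := hf.neg.expected_stoppedValue_mono (isStoppingTime_const ℱ 0) hτ
      (fun ω => WithTop.coe_le_coe.2 (Nat.zero_le _)) (fun ω => WithTop.coe_le_coe.2 (hτle ω))
    have e1 : stoppedValue (-f) (fun _ => WithTop.some (0 : ℕ)) = fun ω => -(f 0 ω) := rfl
    have e2 : stoppedValue (-f) (fun ω => (τ ω : WithTop ℕ)) =
        fun ω => -(stoppedValue f (fun ω => (τ ω : WithTop ℕ)) ω) := rfl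
    rw [e1, e2, integral_neg, integral_neg] at hneg
    linarith
  have hfinal : (ε : ℝ) * (μ {ω | (ε : ℝ) ≤
      (range (N + 1)).sup' nonempty_range_add_one fun k => f k ω}).toReal ≤ ∫ ω, f 0 ω ∂μ :=
    h1.trans (h2.trans h3)
  rw [ENNReal.le_ofReal_iff_toReal_le, ENNReal.toReal_smul]
  · exact hfinal
  · exact ENNReal.mul_ne_top (by simp) (measure_ne_top _ _)
  · exact le_trans (mul_nonneg ε.coe_nonneg ENNReal.toReal_nonneg) hfinal

lemma aux_calc {c α : ℝ} (hc : 0 < c) (hα0 : 0 < α) (hα1 : α < 1) {g : ℝ → ℝ≥0∞}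
    (hg : ∀ t : ℝ, 0 < t → g t ≤ min 1 (ENNReal.ofReal (c / t))) :
    ∫⁻ t in Set.Ioi 0, g t * ENNReal.ofReal (t ^ (α - 1)) ≤
      ENNReal.ofReal (c ^ α / α) + ENNReal.ofReal (c ^ α / (1 - α)) := by
  rw [← Set.Ioc_union_Ioi_eq_Ioi hc.le,
    lintegral_union measurableSet_Ioi (Set.Ioc_disjoint_Ioi le_rfl)]
  have piece1 : ∫⁻ t in Set.Ioc 0 c, g t * ENNReal.ofReal (t ^ (α - 1)) ≤
      ENNReal.ofReal (c ^ α / α) := by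
    calc ∫⁻ t in Set.Ioc 0 c, g t * ENNReal.ofReal (t ^ (α - 1))
        ≤ ∫⁻ t in Set.Ioc 0 c, ENNReal.ofReal (t ^ (α - 1)) := by
          refine lintegral_mono_ae ?_
          filter_upwards [self_mem_ae_restrict measurableSet_Ioc] with t ht
          calc g t * ENNReal.ofReal (t ^ (α - 1))
              ≤ 1 * ENNReal.ofReal (t ^ (α - 1)) :=
                mul_le_mul_left ((hg t ht.1).trans (min_le_left _ _)) _
            _ = _ := one_mul _
      _ = ENNReal.ofReal (∫ t in Set.Ioc 0 c, t ^ (α - 1)) := by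
          rw [← ofReal_integral_eq_lintegral_ofReal]
          · exact (intervalIntegrable_iff_integrableOn_Ioc_of_le hc.le).1
              (intervalIntegral.intervalIntegrable_rpow' (by linarith))
          · filter_upwards [self_mem_ae_restrict measurableSet_Ioc] with t ht
            exact Real.rpow_nonneg ht.1.le _
      _ = ENNReal.ofReal (c ^ α / α) := by
          rw [← intervalIntegral.integral_of_le hc.le, integral_rpow (Or.inl (by linarith))]
          rw [show α - 1 + 1 = α by ring, Real.zero_rpow hα0.ne', sub_zero]
  have piece2 : ∫⁻ t in Set.Ioi c, g t * ENNReal.ofReal (t ^ (α - 1)) ≤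
      ENNReal.ofReal (c ^ α / (1 - α)) := by
    calc ∫⁻ t in Set.Ioi c, g t * ENNReal.ofReal (t ^ (α - 1))
        ≤ ∫⁻ t in Set.Ioi c, ENNReal.ofReal (c * t ^ (α - 2)) := by
          refine lintegral_mono_ae ?_
          filter_upwards [self_mem_ae_restrict measurableSet_Ioi] with t ht
          have ht0 : 0 < t := hc.trans ht
          calc g t * ENNReal.ofReal (t ^ (α - 1))
              ≤ ENNReal.ofReal (c / t) * ENNReal.ofReal (t ^ (α - 1)) :=
                mul_le_mul_left ((hg t ht0).trans (min_le_right _ _)) _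
            _ = ENNReal.ofReal (c / t * t ^ (α - 1)) := by
                rw [← ENNReal.ofReal_mul (by positivity)]
            _ = ENNReal.ofReal (c * t ^ (α - 2)) := by
                congr 1
                rw [show α - 1 = α - 2 + 1 by ring, Real.rpow_add_one ht0.ne']
                field_simp
      _ = ENNReal.ofReal (∫ t in Set.Ioi c, c * t ^ (α - 2)) := by
          rw [← ofReal_integral_eq_lintegral_ofReal]
          · exact (integrableOn_Ioi_rpow_of_lt (by linarith) hc).const_mul c
          · filter_upwards [self_mem_ae_restrict measurableSet_Ioi] with t ht
            exact mul_nonneg hc.le (Real.rpow_nonneg (hc.trans ht).le _)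
      _ = ENNReal.ofReal (c ^ α / (1 - α)) := by
          rw [MeasureTheory.integral_const_mul, integral_Ioi_rpow_of_lt (by linarith) hc]
          congr 1
          rw [show α - 2 + 1 = α - 1 by ring, Real.rpow_sub_one hc.ne']
          have h2 : α - 1 ≠ 0 := by linarith
          have h3 : (1 : ℝ) - α ≠ 0 := by linarith
          field_simp
          ring
  exact add_le_add piece1 piece2

/-- If `{T_i, 1 ≤ i ≤ n}` is a non-negative supermartingale (adapted to a filtration `𝒢`
with `E[T_{i+1} | 𝒢_i] ≤ T_i` a.s.), then for any `0 < α < 1`,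
`E[max_{1≤i≤n} T_i^α] ≤ (E[T_1])^α / (1 - α)`. -/
theorem stmt0 {Ω : Type*} {m : MeasurableSpace Ω} (μ : Measure Ω) [IsProbabilityMeasure μ]
    (𝒢 : Filtration ℕ m) (T : ℕ → Ω → ℝ) (n : ℕ) (hn : 1 ≤ n)
    (hadapt : ∀ i ∈ Finset.Icc 1 n, StronglyMeasurable[𝒢 i] (T i))
    (hint : ∀ i ∈ Finset.Icc 1 n, Integrable (T i) μ)
    (hsuper : ∀ i ∈ Finset.Ico 1 n, μ[T (i + 1)|𝒢 i] ≤ᵐ[μ] T i)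
    (hnonneg : ∀ i ∈ Finset.Icc 1 n, 0 ≤ᵐ[μ] T i)
    (α : ℝ) (hα0 : 0 < α) (hα1 : α < 1) :
    ∫ ω, ((Finset.Icc 1 n).sup' (Finset.nonempty_Icc.mpr hn) fun i => T i ω) ^ α ∂μ ≤
      (∫ ω, T 1 ω ∂μ) ^ α / (1 - α) := by
  have hmem : ∀ k : ℕ, min (k + 1) n ∈ Finset.Icc 1 n := fun k => by
    simp only [Finset.mem_Icc]; omega
  set ℱ : Filtration ℕ m :=
    ⟨fun k => 𝒢 (min (k + 1) n), fun i j hij => 𝒢.mono (by omega), fun k => 𝒢.le _⟩ with hℱ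
  set S : ℕ → Ω → ℝ := fun k => T (min (k + 1) n) with hS
  have hSsuper : Supermartingale S ℱ μ := by
    refine supermartingale_nat (fun k => hadapt _ (hmem k)) (fun k => hint _ (hmem k)) ?_
    intro i
    by_cases h : i + 1 < n
    · have h1 : min (i + 1 + 1) n = i + 1 + 1 := by omega
      have h2 : min (i + 1) n = i + 1 := by omega
      show μ[T (min (i + 1 + 1) n)|𝒢 (min (i + 1) n)] ≤ᵐ[μ] T (min (i + 1) n)
      rw [h1, h2]
      exact hsuper (i + 1) (Finset.mem_Ico.2 ⟨by omega, h⟩)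
    · have h1 : min (i + 1 + 1) n = n := by omega
      have h2 : min (i + 1) n = n := by omega
      show μ[T (min (i + 1 + 1) n)|𝒢 (min (i + 1) n)] ≤ᵐ[μ] T (min (i + 1) n)
      rw [h1, h2]
      exact Filter.EventuallyEq.le (Filter.EventuallyEq.of_eq (condExp_of_stronglyMeasurable (𝒢.le n)
        (hadapt n (Finset.mem_Icc.2 ⟨hn, le_rfl⟩)) (hint n (Finset.mem_Icc.2 ⟨hn, le_rfl⟩))))
  -- sup equality
  have hsup_eq : ∀ ω, ((range (n - 1 + 1)).sup' nonempty_range_add_one fun k => S k ω) =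
      (Finset.Icc 1 n).sup' (Finset.nonempty_Icc.mpr hn) fun i => T i ω := by
    intro ω
    apply le_antisymm
    · refine Finset.sup'_le _ _ fun k hk => ?_
      rw [Finset.mem_range] at hk
      have h1 : min (k + 1) n = k + 1 := by omega
      show T (min (k + 1) n) ω ≤ _
      rw [h1]
      exact Finset.le_sup' (fun i => T i ω) (Finset.mem_Icc.2 ⟨by omega, by omega⟩)
    · refine Finset.sup'_le _ _ fun i hi => ?_
      rw [Finset.mem_Icc] at hi
      have h1 : i - 1 ∈ range (n - 1 + 1) := Finset.mem_range.2 (by omega)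
      have h2 : S (i - 1) ω = T i ω := by
        show T (min (i - 1 + 1) n) ω = T i ω
        congr 1; omega
      calc T i ω = S (i - 1) ω := h2.symm
        _ ≤ _ := Finset.le_sup' (fun k => S k ω) h1
  set M : Ω → ℝ := fun ω => (Finset.Icc 1 n).sup' (Finset.nonempty_Icc.mpr hn) fun i => T i ω
    with hM
  set c : ℝ := ∫ ω, T 1 ω ∂μ with hc
  have hn1 : (1 : ℕ) ∈ Finset.Icc 1 n := Finset.mem_Icc.2 ⟨le_rfl, hn⟩
  have hc0 : 0 ≤ c := integral_nonneg_of_ae (hnonneg 1 hn1)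
  have hES : ∫ ω, S 0 ω ∂μ = c := by
    show ∫ ω, T (min 1 n) ω ∂μ = c
    rw [min_eq_left hn]
  have hSnn : ∀ k, 0 ≤ᵐ[μ] S k := fun k => hnonneg _ (hmem k)
  have htail : ∀ t : ℝ, 0 < t → μ {a | t ≤ M a} ≤ min 1 (ENNReal.ofReal (c / t)) := by
    intro t ht
    refine le_min ((measure_mono (Set.subset_univ _)).trans_eq measure_univ) ?_
    have hmax := super_smul_le hSsuper hSnn t.toNNReal (n - 1)
    rw [hES] at hmax
    have hset : {ω | ((t.toNNReal : ℝ≥0) : ℝ) ≤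
        (range (n - 1 + 1)).sup' nonempty_range_add_one fun k => S k ω} = {a | t ≤ M a} := by
      ext ω
      simp only [Set.mem_setOf_eq, hsup_eq ω, Real.coe_toNNReal _ ht.le]
      exact Iff.rfl
    rw [hset] at hmax
    rw [ENNReal.ofReal_div_of_pos ht, ENNReal.le_div_iff_mul_le
      (Or.inl (by simp [ht, ht.not_ge])) (Or.inl ENNReal.ofReal_ne_top)]
    rw [mul_comm]
    simpa [ENNReal.smul_def, ENNReal.ofReal] using hmax
  -- measurability of M
  have hSmble : ∀ k, Measurable (S k) := fun k =>
    ((hadapt _ (hmem k)).measurable).le (𝒢.le _)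
  have hMmble : Measurable M := by
    have h := Finset.measurable_range_sup'' (n := n - 1) fun k _ => hSmble k
    have he : (fun ω => (range (n - 1 + 1)).sup' nonempty_range_add_one fun k => S k ω) = M :=
      funext hsup_eq
    rwa [he] at h
  have hMnn : 0 ≤ᵐ[μ] M := by
    filter_upwards [hnonneg 1 hn1] with ω hω
    exact le_trans hω (Finset.le_sup' (fun i => T i ω) hn1)
  have hpow_nn : 0 ≤ᵐ[μ] fun ω => M ω ^ α := by
    filter_upwards [hMnn] with ω hω
    exact Real.rpow_nonneg hω α
  have hpow_sm : AEStronglyMeasurable (fun ω => M ω ^ α) μ :=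
    ((Real.continuous_rpow_const hα0.le).measurable.comp hMmble).aestronglyMeasurable
  have key := lintegral_rpow_eq_lintegral_meas_le_mul μ hMnn hMmble.aemeasurable hα0
  rcases eq_or_lt_of_le hc0 with hceq | hcpos
  · -- degenerate case c = 0
    have hzero : ∀ᵐ t ∂(volume.restrict (Set.Ioi (0 : ℝ))),
        μ {a | t ≤ M a} * ENNReal.ofReal (t ^ (α - 1)) = 0 := by
      filter_upwards [self_mem_ae_restrict measurableSet_Ioi] with t ht
      have h := htail t ht
      rw [← hceq] at h
      have h' : μ {a | t ≤ M a} = 0 := by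
        simpa using h.trans (min_le_right _ _)
      rw [h', zero_mul]
    rw [lintegral_congr_ae hzero, lintegral_zero, mul_zero] at key
    have hlhs : ∫ ω, M ω ^ α ∂μ = 0 := by
      rw [integral_eq_lintegral_of_nonneg_ae hpow_nn hpow_sm, key, ENNReal.toReal_zero]
    rw [hlhs, ← hceq, Real.zero_rpow hα0.ne', zero_div]
  · -- main case c > 0
    have hbound := aux_calc hcpos hα0 hα1 (g := fun t => μ {a | t ≤ M a}) htail
    have hfin : ∫⁻ ω, ENNReal.ofReal (M ω ^ α) ∂μ ≤ ENNReal.ofReal (c ^ α / (1 - α)) := by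
      rw [key]
      calc ENNReal.ofReal α * ∫⁻ t in Set.Ioi 0, μ {a | t ≤ M a} * ENNReal.ofReal (t ^ (α - 1))
          ≤ ENNReal.ofReal α *
            (ENNReal.ofReal (c ^ α / α) + ENNReal.ofReal (c ^ α / (1 - α))) :=
            mul_le_mul_right hbound _
        _ = ENNReal.ofReal (α * (c ^ α / α + c ^ α / (1 - α))) := by
            rw [← ENNReal.ofReal_add (by positivity)
              (div_nonneg (Real.rpow_nonneg hc0 _) (by linarith)),
              ← ENNReal.ofReal_mul hα0.le]
        _ = ENNReal.ofReal (c ^ α / (1 - α)) := by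
            congr 1
            have h2 : α ≠ 0 := hα0.ne'
            have h3 : (1 : ℝ) - α ≠ 0 := by linarith
            field_simp
            ring
    rw [integral_eq_lintegral_of_nonneg_ae hpow_nn hpow_sm]
    calc (∫⁻ ω, ENNReal.ofReal (M ω ^ α) ∂μ).toReal
        ≤ (ENNReal.ofReal (c ^ α / (1 - α))).toReal :=
          ENNReal.toReal_mono ENNReal.ofReal_ne_top hfin
      _ = c ^ α / (1 - α) := ENNReal.toReal_ofReal
          (div_nonneg (Real.rpow_nonneg hc0 _) (by linarith))
end

section
/- Let p > 2 and let {X_i, i ≥ 1} be a sequence of NA random variables with E[X_i] = 0 for all i, such that B_n := Σ_{i=1}^n E[X_i²] and A(p) := Σ_{i=1}^n ||X_i||_{w,p}^p are each bounded by a constant multiple of n. Then for any x > 0 there exists a positive constant C_x not depending on n such that for all n ≥ 2, P(max_{1≤k≤n} S_k > nx) ≤ C_x (ln n)^p / n^{p−1}. -/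
open MeasureTheory Finset

/-- A sequence `{X_i, i ≥ 1}` is negatively associated (NA): for every pair of disjoint
finite subsets `A₁, A₂` of `{1, 2, …}` and all coordinatewise nondecreasing functions
`f₁, f₂`, one has `Cov(f₁(X_i, i ∈ A₁), f₂(X_j, j ∈ A₂)) ≤ 0` whenever the covariance
exists. -/
def NegAssoc {Ω : Type*} [MeasurableSpace Ω] (μ : Measure Ω) (X : ℕ → Ω → ℝ) : Prop :=
  ∀ A₁ A₂ : Finset ℕ, (∀ i ∈ A₁, 1 ≤ i) → (∀ j ∈ A₂, 1 ≤ j) → Disjoint A₁ A₂ →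
    ∀ (f₁ : (↥A₁ → ℝ) → ℝ) (f₂ : (↥A₂ → ℝ) → ℝ), Monotone f₁ → Monotone f₂ →
      Integrable (fun ω => f₁ fun i => X i.1 ω) μ →
      Integrable (fun ω => f₂ fun j => X j.1 ω) μ →
      Integrable (fun ω => (f₁ fun i => X i.1 ω) * (f₂ fun j => X j.1 ω)) μ →
      ∫ ω, (f₁ fun i => X i.1 ω) * (f₂ fun j => X j.1 ω) ∂μ ≤
        (∫ ω, (f₁ fun i => X i.1 ω) ∂μ) * ∫ ω, (f₂ fun j => X j.1 ω) ∂μ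

/-- The partial sum `S_k = ∑_{i=1}^k X_i`. -/
def pSum {Ω : Type*} (X : ℕ → Ω → ℝ) (k : ℕ) (ω : Ω) : ℝ := ∑ i ∈ Finset.Icc 1 k, X i ω

/-- The weak moment of order `p`: `‖Z‖_{w,p}^p = sup_{x>0} x^p P(|Z| > x)`. -/
noncomputable def weakMoment {Ω : Type*} [MeasurableSpace Ω] (μ : Measure Ω) (p : ℝ)
    (Z : Ω → ℝ) : ℝ :=
  sSup {r : ℝ | ∃ x : ℝ, 0 < x ∧ r = x ^ p * (μ {ω | x < |Z ω|}).toReal}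


/-- truncation operator -/
noncomputable def trc (b y : ℝ) : ℝ := max (-b) (min y b)

lemma trc_mono (b : ℝ) : Monotone (trc b) :=
  fun _ _ h => max_le_max le_rfl (min_le_min h le_rfl)

lemma abs_trc_le {b : ℝ} (hb : 0 ≤ b) (y : ℝ) : |trc b y| ≤ b := by
  rw [abs_le]
  constructor
  · exact le_max_left _ _
  · exact max_le (by linarith) (min_le_right _ _)

lemma abs_trc_le_abs {b : ℝ} (hb : 0 ≤ b) (y : ℝ) : |trc b y| ≤ |y| := by
  rw [abs_le, trc, max_def, min_def]
  rcases abs_cases y with ⟨h1, h2⟩ | ⟨h1, h2⟩ <;> rw [h1] <;>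
    split_ifs <;> constructor <;> linarith

lemma trc_eq {b y : ℝ} (h : |y| ≤ b) : trc b y = y := by
  rw [abs_le] at h
  unfold trc
  rw [min_eq_left h.2, max_eq_right h.1]

lemma trc_sq_le {b : ℝ} (hb : 0 ≤ b) (y : ℝ) : trc b y ^ 2 ≤ y ^ 2 := by
  rw [← sq_abs (trc b y), ← sq_abs y]
  exact pow_le_pow_left₀ (abs_nonneg _) (abs_trc_le_abs hb y) 2

lemma abs_trc_sub_le {b : ℝ} (hb : 0 < b) (y : ℝ) : |trc b y - y| ≤ y ^ 2 / b := by
  rcases le_or_gt |y| b with h | h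
  · rw [trc_eq h]; simp; positivity
  · have h1 : |trc b y - y| ≤ |y| := by
      unfold trc
      rcases le_total y 0 with hy | hy
      · have : min y b = y := min_eq_left (by linarith [abs_of_nonpos hy])
        rw [this]
        rcases le_total (-b) y with h2 | h2
        · rw [max_eq_right h2]; simp
        · rw [max_eq_left h2, abs_of_nonpos hy]
          rw [abs_le]; constructor <;> linarith
      · have hyb : b ≤ y := by rw [abs_of_nonneg hy] at h; linarith
        rw [min_eq_right hyb, max_eq_right (by linarith), abs_of_nonneg hy]
        rw [abs_le]; constructor <;> linarith
    calc |trc b y - y| ≤ |y| := h1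
      _ ≤ y ^ 2 / b := by
        rw [le_div_iff₀ hb, ← sq_abs]
        nlinarith [abs_nonneg y, h.le]

lemma trc_measurable {b : ℝ} {Ω : Type*} [MeasurableSpace Ω] {f : Ω → ℝ} (hf : Measurable f) :
    Measurable (fun ω => trc b (f ω)) := by
  unfold trc
  exact measurable_const.max (hf.min measurable_const)

/-- e^z ≤ 1 + z + z² for |z| ≤ 1 -/
lemma exp_le_quad {z : ℝ} (h : |z| ≤ 1) : Real.exp z ≤ 1 + z + z ^ 2 := by
  have := Real.exp_bound h (n := 2) (by norm_num)
  have h2 : ∑ i ∈ range 2, z ^ i / i.factorial = 1 + z := by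
    simp [Finset.sum_range_succ]
  rw [h2] at this
  have h3 : |z| ^ 2 * ((2 : ℕ).succ / ((2:ℕ).factorial * 2)) ≤ z ^ 2 := by
    rw [sq_abs]
    norm_num
    nlinarith [sq_nonneg z]
  have := abs_le.1 this
  linarith [this.2]

lemma integrable_bdd {Ω : Type*} [MeasurableSpace Ω] {μ : Measure Ω} [IsFiniteMeasure μ]
    {f : Ω → ℝ} (hf : Measurable f) {C : ℝ} (h : ∀ ω, |f ω| ≤ C) : Integrable f μ :=
  (integrable_const C).mono' hf.aestronglyMeasurable (ae_of_all _ fun ω => by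
    simpa [Real.norm_eq_abs] using h ω)

lemma na_exp_prod {Ω : Type*} [MeasurableSpace Ω] (μ : Measure Ω) [IsProbabilityMeasure μ]
    (X : ℕ → Ω → ℝ) (hmeas : ∀ i, Measurable (X i)) (hNA : NegAssoc μ X)
    {t b : ℝ} (ht : 0 ≤ t) (hb : 0 ≤ b) :
    ∀ k : ℕ, ∫ ω, ∏ i ∈ Icc 1 k, Real.exp (t * trc b (X i ω)) ∂μ ≤
      ∏ i ∈ Icc 1 k, ∫ ω, Real.exp (t * trc b (X i ω)) ∂μ := by
  have hGmeas : ∀ i, Measurable (fun ω => Real.exp (t * trc b (X i ω))) := fun i =>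
    Real.measurable_exp.comp (measurable_const.mul (trc_measurable (hmeas i)))
  have hGle : ∀ i ω, Real.exp (t * trc b (X i ω)) ≤ Real.exp (t * b) := fun i ω =>
    Real.exp_le_exp.2 (mul_le_mul_of_nonneg_left ((abs_le.1 (abs_trc_le hb _)).2) ht)
  have hGpos : ∀ i ω, 0 < Real.exp (t * trc b (X i ω)) := fun i ω => Real.exp_pos _
  have hPmeas : ∀ s : Finset ℕ, Measurable (fun ω => ∏ i ∈ s, Real.exp (t * trc b (X i ω))) :=
    fun s => Finset.measurable_prod s (fun i _ => hGmeas i)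
  have hPbd : ∀ (s : Finset ℕ) ω, |∏ i ∈ s, Real.exp (t * trc b (X i ω))| ≤
      Real.exp (t * b) ^ s.card := by
    intro s ω
    rw [abs_of_nonneg (Finset.prod_nonneg fun i _ => (hGpos i ω).le)]
    calc ∏ i ∈ s, Real.exp (t * trc b (X i ω)) ≤ ∏ _i ∈ s, Real.exp (t * b) :=
          Finset.prod_le_prod (fun i _ => (hGpos i ω).le) (fun i _ => hGle i ω)
      _ = Real.exp (t * b) ^ s.card := by rw [Finset.prod_const]
  have hPint : ∀ s : Finset ℕ, Integrable (fun ω => ∏ i ∈ s, Real.exp (t * trc b (X i ω))) μ :=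
    fun s => integrable_bdd (hPmeas s) (hPbd s)
  intro k
  induction k with
  | zero => simp
  | succ k ih =>
    have hnotmem : (k + 1) ∉ Icc 1 k := by simp
    have hins : Icc 1 (k + 1) = insert (k + 1) (Icc 1 k) := by
      ext i; simp [Finset.mem_Icc, Finset.mem_insert]; omega
    set f₁ : (↥(Icc 1 k) → ℝ) → ℝ :=
      fun v => ∏ i : ↥(Icc 1 k), Real.exp (t * trc b (v i)) with hf₁
    set f₂ : (↥({k + 1} : Finset ℕ) → ℝ) → ℝ :=
      fun v => Real.exp (t * trc b (v ⟨k + 1, Finset.mem_singleton_self _⟩)) with hf₂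
    have mono1 : Monotone f₁ := by
      intro v w hvw
      exact Finset.prod_le_prod (fun i _ => (Real.exp_pos _).le)
        (fun i _ => Real.exp_le_exp.2 (mul_le_mul_of_nonneg_left (trc_mono b (hvw i)) ht))
    have mono2 : Monotone f₂ := fun v w hvw =>
      Real.exp_le_exp.2 (mul_le_mul_of_nonneg_left (trc_mono b (hvw _)) ht)
    have e1 : ∀ ω : Ω, (f₁ fun i => X i.1 ω) = ∏ i ∈ Icc 1 k, Real.exp (t * trc b (X i ω)) :=
      fun ω => Finset.prod_coe_sort (Icc 1 k) (fun j => Real.exp (t * trc b (X j ω)))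
    have e2 : ∀ ω : Ω, (f₂ fun j => X j.1 ω) = Real.exp (t * trc b (X (k + 1) ω)) := fun ω => rfl
    have int1 : Integrable (fun ω => f₁ fun i => X i.1 ω) μ := by
      simp only [e1]; exact hPint _
    have int2 : Integrable (fun ω => f₂ fun j => X j.1 ω) μ := by
      simp only [e2]; exact integrable_bdd (hGmeas _) (fun ω => by
        rw [abs_of_nonneg (hGpos _ ω).le]; exact hGle _ ω)
    have int12 : Integrable (fun ω => (f₁ fun i => X i.1 ω) * (f₂ fun j => X j.1 ω)) μ := by
      simp only [e1, e2]
      refine integrable_bdd ((hPmeas _).mul (hGmeas _)) (C := Real.exp (t*b) ^ (Icc 1 k).card * Real.exp (t*b)) (fun ω => ?_)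
      rw [abs_mul]
      refine mul_le_mul (hPbd _ ω) ?_ (abs_nonneg _) (by positivity)
      rw [abs_of_nonneg (hGpos _ ω).le]; exact hGle _ ω
    have key := hNA (Icc 1 k) {k + 1} (fun i hi => (Finset.mem_Icc.1 hi).1)
      (fun j hj => by simp at hj; omega)
      (by simp [Finset.disjoint_singleton_right])
      f₁ f₂ mono1 mono2 int1 int2 int12
    simp only [e1, e2] at key
    calc ∫ ω, ∏ i ∈ Icc 1 (k + 1), Real.exp (t * trc b (X i ω)) ∂μ
        = ∫ ω, (∏ i ∈ Icc 1 k, Real.exp (t * trc b (X i ω))) *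
            Real.exp (t * trc b (X (k + 1) ω)) ∂μ := by
          simp only [hins, Finset.prod_insert hnotmem]; congr 1; ext ω; ring
      _ ≤ (∫ ω, ∏ i ∈ Icc 1 k, Real.exp (t * trc b (X i ω)) ∂μ) *
            ∫ ω, Real.exp (t * trc b (X (k + 1) ω)) ∂μ := key
      _ ≤ (∏ i ∈ Icc 1 k, ∫ ω, Real.exp (t * trc b (X i ω)) ∂μ) *
            ∫ ω, Real.exp (t * trc b (X (k + 1) ω)) ∂μ :=
          mul_le_mul_of_nonneg_right ih (integral_nonneg fun ω => (hGpos _ ω).le)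
      _ = ∏ i ∈ Icc 1 (k + 1), ∫ ω, Real.exp (t * trc b (X i ω)) ∂μ := by
          rw [hins, Finset.prod_insert hnotmem]; ring

set_option maxHeartbeats 1000000 in
/-- Remark after Proposition 2.2: for `p > 2` and centered NA random variables whose
`B_n = ∑_{i=1}^n E[X_i²]` and `A(p) = ∑_{i=1}^n ‖X_i‖_{w,p}^p` grow at most linearly in `n`,
for any `x > 0` there is `C_x > 0` independent of `n` with
`P(max_{1≤k≤n} S_k > nx) ≤ C_x (ln n)^p / n^{p−1}` for all `n ≥ 2`. -/
theorem stmt5 {Ω : Type*} [MeasurableSpace Ω] (μ : Measure Ω) [IsProbabilityMeasure μ]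
    (X : ℕ → Ω → ℝ) (hmeas : ∀ i, Measurable (X i)) (hNA : NegAssoc μ X)
    (hint : ∀ i, 1 ≤ i → Integrable (X i) μ)
    (hmean : ∀ i, 1 ≤ i → ∫ ω, X i ω ∂μ = 0)
    (p : ℝ) (hp : 2 < p)
    (hB : ∀ i, 1 ≤ i → Integrable (fun ω => X i ω ^ 2) μ)
    (hA : ∀ i, 1 ≤ i →
      BddAbove {r : ℝ | ∃ x : ℝ, 0 < x ∧ r = x ^ p * (μ {ω | x < |X i ω|}).toReal})
    (CB CA : ℝ)
    (hCB : ∀ n : ℕ, (∑ i ∈ Finset.Icc 1 n, ∫ ω, X i ω ^ 2 ∂μ) ≤ CB * n)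
    (hCA : ∀ n : ℕ, (∑ i ∈ Finset.Icc 1 n, weakMoment μ p (X i)) ≤ CA * n)
    (x : ℝ) (hx : 0 < x) :
    ∃ C : ℝ, 0 < C ∧ ∀ n : ℕ, 2 ≤ n →
      (μ {ω | ∃ k ∈ Finset.Icc 1 n, (n : ℝ) * x < pSum X k ω}).toReal ≤
        C * Real.log n ^ p / (n : ℝ) ^ (p - 1) := by
  have hp0 : (0:ℝ) < p := by linarith
  have hCB0 : 0 ≤ CB := by
    have h1 := hCB 1
    have h2 : 0 ≤ ∫ ω, X 1 ω ^ 2 ∂μ := integral_nonneg fun ω => sq_nonneg _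
    norm_num at h1
    linarith
  have hCA0 : 0 ≤ CA := by
    have h1 := hCA 1
    have h2 : 0 ≤ weakMoment μ p (X 1) := by
      have hmem : (1:ℝ) ^ p * (μ {ω | (1:ℝ) < |X 1 ω|}).toReal ∈
          {r : ℝ | ∃ y : ℝ, 0 < y ∧ r = y ^ p * (μ {ω | y < |X 1 ω|}).toReal} :=
        ⟨1, one_pos, rfl⟩
      have hle := le_csSup (hA 1 le_rfl) hmem
      have h0 : 0 ≤ (1:ℝ) ^ p * (μ {ω | (1:ℝ) < |X 1 ω|}).toReal := by positivity
      exact h0.trans hle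
    rw [Finset.Icc_self, Finset.sum_singleton] at h1
    norm_num at h1
    linarith
  set M := 8 * CB * p ^ 2 / x ^ 2 with hM
  have hlog2 : (0:ℝ) < Real.log 2 := Real.log_pos one_lt_two
  refine ⟨CA * (p / x) ^ p + Real.exp M / Real.log 2 ^ p, ?_, ?_⟩
  · have h1 : 0 < Real.exp M / Real.log 2 ^ p :=
      div_pos (Real.exp_pos _) (Real.rpow_pos_of_pos hlog2 p)
    have h2 : 0 ≤ CA * (p / x) ^ p :=
      mul_nonneg hCA0 (Real.rpow_nonneg (by positivity) p)
    linarith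
  intro n hn
  have hnpos : (0:ℝ) < n := by positivity
  have hn2 : (2:ℝ) ≤ n := by exact_mod_cast hn
  set L := Real.log n with hLdef
  have hL2 : Real.log 2 ≤ L := Real.log_le_log (by norm_num) hn2
  have hLpos : 0 < L := lt_of_lt_of_le hlog2 hL2
  set b := (n:ℝ) * x / (p * L) with hbdef
  have hbpos : 0 < b := by positivity
  set t := p * L / ((n:ℝ) * x) with htdef
  have htpos : 0 < t := by positivity
  have htb : t * b = 1 := by
    rw [htdef, hbdef]; field_simp
  have hsq : L ^ 2 ≤ 4 * n := by
    have h1 : L = 2 * Real.log (Real.sqrt n) := by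
      rw [Real.log_sqrt hnpos.le]; ring
    have h2 : Real.log (Real.sqrt n) ≤ Real.sqrt n :=
      (Real.log_le_sub_one_of_pos (Real.sqrt_pos.2 hnpos)).trans (by linarith)
    have h3 : L ≤ 2 * Real.sqrt n := by rw [h1]; linarith
    nlinarith [Real.sq_sqrt hnpos.le, Real.sqrt_nonneg (n:ℝ), hLpos.le]
  -- truncated variables
  set Y : ℕ → Ω → ℝ := fun i ω => trc b (X i ω) with hYdef
  have hYmeas : ∀ i, Measurable (Y i) := fun i => trc_measurable (hmeas i)
  have hYbd : ∀ i ω, |Y i ω| ≤ b := fun i ω => abs_trc_le hbpos.le _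
  have hYint : ∀ i, Integrable (Y i) μ := fun i => integrable_bdd (hYmeas i) (hYbd i)
  have hY2int : ∀ i, Integrable (fun ω => Y i ω ^ 2) μ := fun i =>
    integrable_bdd ((hYmeas i).pow_const 2) (C := b ^ 2) (fun ω => by
      rw [abs_pow]
      exact pow_le_pow_left₀ (abs_nonneg _) (hYbd i ω) 2)
  -- second moment of truncation
  have hs : ∀ i, 1 ≤ i → ∫ ω, Y i ω ^ 2 ∂μ ≤ ∫ ω, X i ω ^ 2 ∂μ := fun i hi =>
    integral_mono (hY2int i) (hB i hi) (fun ω => trc_sq_le hbpos.le _)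
  have hs0 : ∀ i, 0 ≤ ∫ ω, Y i ω ^ 2 ∂μ := fun i => integral_nonneg fun ω => sq_nonneg _
  -- mean of truncation
  have hm : ∀ i, 1 ≤ i → |∫ ω, Y i ω ∂μ| ≤ (∫ ω, X i ω ^ 2 ∂μ) / b := by
    intro i hi
    have e : ∫ ω, Y i ω ∂μ = ∫ ω, (Y i ω - X i ω) ∂μ := by
      rw [integral_sub (hYint i) (hint i hi), hmean i hi, sub_zero]
    rw [e]
    calc |∫ ω, (Y i ω - X i ω) ∂μ| ≤ ∫ ω, |Y i ω - X i ω| ∂μ := by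
          simpa [Real.norm_eq_abs] using
            norm_integral_le_integral_norm (μ := μ) (f := fun ω => Y i ω - X i ω)
      _ ≤ ∫ ω, X i ω ^ 2 / b ∂μ := by
          refine integral_mono ((hYint i).sub (hint i hi)).abs ((hB i hi).div_const b) ?_
          intro ω
          exact abs_trc_sub_le hbpos _
      _ = (∫ ω, X i ω ^ 2 ∂μ) / b := integral_div b _
  -- exponential moment of each truncation
  have hEexp : ∀ i, Integrable (fun ω => Real.exp (t * Y i ω)) μ := fun i =>
    integrable_bdd (Real.measurable_exp.comp (measurable_const.mul (hYmeas i)))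
      (C := Real.exp (t * b)) fun ω => by
        rw [abs_of_pos (Real.exp_pos _)]
        exact Real.exp_le_exp.2 (mul_le_mul_of_nonneg_left ((abs_le.1 (hYbd i ω)).2) htpos.le)
  have hexpm : ∀ i, 1 ≤ i → ∫ ω, Real.exp (t * Y i ω) ∂μ ≤
      Real.exp (t * (∫ ω, Y i ω ∂μ) + t ^ 2 * ∫ ω, Y i ω ^ 2 ∂μ) := by
    intro i hi
    have hptw : ∀ ω, Real.exp (t * Y i ω) ≤ 1 + t * Y i ω + t ^ 2 * Y i ω ^ 2 := by
      intro ω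
      have habs : |t * Y i ω| ≤ 1 := by
        rw [abs_mul, abs_of_pos htpos]
        calc t * |Y i ω| ≤ t * b := mul_le_mul_of_nonneg_left (hYbd i ω) htpos.le
          _ = 1 := htb
      calc Real.exp (t * Y i ω) ≤ 1 + t * Y i ω + (t * Y i ω) ^ 2 := exp_le_quad habs
        _ = 1 + t * Y i ω + t ^ 2 * Y i ω ^ 2 := by ring
    have i0 : Integrable (fun _ : Ω => (1:ℝ)) μ := integrable_const 1
    have i3 : Integrable (fun ω => t * Y i ω) μ := (hYint i).const_mul t
    have i2 : Integrable (fun ω => t ^ 2 * Y i ω ^ 2) μ := (hY2int i).const_mul (t ^ 2)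
    have i1 : Integrable (fun ω => 1 + t * Y i ω) μ := i0.add i3
    have hintR : Integrable (fun ω => 1 + t * Y i ω + t ^ 2 * Y i ω ^ 2) μ := i1.add i2
    have h1 : ∫ ω, Real.exp (t * Y i ω) ∂μ ≤ ∫ ω, (1 + t * Y i ω + t ^ 2 * Y i ω ^ 2) ∂μ :=
      integral_mono (hEexp i) hintR hptw
    have h2 : ∫ ω, (1 + t * Y i ω + t ^ 2 * Y i ω ^ 2) ∂μ =
        1 + (t * (∫ ω, Y i ω ∂μ) + t ^ 2 * ∫ ω, Y i ω ^ 2 ∂μ) := by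
      rw [integral_add i1 i2, integral_add i0 i3,
        integral_const_mul, integral_const_mul, integral_const]
      simp [measure_univ]
      ring
    have h3 := Real.add_one_le_exp (t * (∫ ω, Y i ω ∂μ) + t ^ 2 * ∫ ω, Y i ω ^ 2 ∂μ)
    linarith
  -- key exponential bound for each k
  have key1 : ∀ k ∈ Finset.Icc 1 n,
      (μ {ω | (n:ℝ) * x < ∑ i ∈ Finset.Icc 1 k, Y i ω}).toReal ≤
        Real.exp M * (n:ℝ) ^ (-p) := by
    intro k hk
    have hkn : k ≤ n := (Finset.mem_Icc.1 hk).2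
    have hSmeas : Measurable (fun ω => ∑ i ∈ Finset.Icc 1 k, Y i ω) :=
      Finset.measurable_sum _ fun i _ => hYmeas i
    have hEeq : ∀ ω, Real.exp (t * ∑ i ∈ Finset.Icc 1 k, Y i ω) =
        ∏ i ∈ Finset.Icc 1 k, Real.exp (t * Y i ω) := by
      intro ω
      rw [Finset.mul_sum, Real.exp_sum]
    have hSint : Integrable (fun ω => Real.exp (t * ∑ i ∈ Finset.Icc 1 k, Y i ω)) μ := by
      refine integrable_bdd (Real.measurable_exp.comp (measurable_const.mul hSmeas))
        (C := Real.exp (t * (b * k))) fun ω => ?_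
      rw [abs_of_pos (Real.exp_pos _)]
      refine Real.exp_le_exp.2 (mul_le_mul_of_nonneg_left ?_ htpos.le)
      calc ∑ i ∈ Finset.Icc 1 k, Y i ω ≤ ∑ _i ∈ Finset.Icc 1 k, b :=
            Finset.sum_le_sum fun i _ => (abs_le.1 (hYbd i ω)).2
        _ = b * k := by
            rw [Finset.sum_const, Nat.card_Icc, Nat.add_sub_cancel, nsmul_eq_mul]
            ring
    have hsub : {ω | (n:ℝ) * x < ∑ i ∈ Finset.Icc 1 k, Y i ω} ⊆
        {ω | Real.exp (t * ((n:ℝ) * x)) ≤ Real.exp (t * ∑ i ∈ Finset.Icc 1 k, Y i ω)} := by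
      intro ω hω
      simp only [Set.mem_setOf_eq] at hω ⊢
      exact Real.exp_le_exp.2 (mul_le_mul_of_nonneg_left hω.le htpos.le)
    have hmark := mul_meas_ge_le_integral_of_nonneg
      (ae_of_all μ fun ω => (Real.exp_pos (t * ∑ i ∈ Finset.Icc 1 k, Y i ω)).le) hSint
      (Real.exp (t * ((n:ℝ) * x)))
    have hmono : (μ {ω | (n:ℝ) * x < ∑ i ∈ Finset.Icc 1 k, Y i ω}).toReal ≤
        (μ {ω | Real.exp (t * ((n:ℝ) * x)) ≤
          Real.exp (t * ∑ i ∈ Finset.Icc 1 k, Y i ω)}).toReal :=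
      ENNReal.toReal_mono (measure_ne_top μ _) (measure_mono hsub)
    -- bound the integral
    have hintbound : ∫ ω, Real.exp (t * ∑ i ∈ Finset.Icc 1 k, Y i ω) ∂μ ≤
        Real.exp (2 * CB * n * t ^ 2) := by
      have e1 : ∫ ω, Real.exp (t * ∑ i ∈ Finset.Icc 1 k, Y i ω) ∂μ =
          ∫ ω, ∏ i ∈ Finset.Icc 1 k, Real.exp (t * trc b (X i ω)) ∂μ := by
        congr 1
        funext ω
        rw [hEeq ω]
      have e2 := na_exp_prod μ X hmeas hNA htpos.le hbpos.le k
      have e3 : ∏ i ∈ Finset.Icc 1 k, ∫ ω, Real.exp (t * trc b (X i ω)) ∂μ ≤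
          ∏ i ∈ Finset.Icc 1 k, Real.exp (t * (∫ ω, Y i ω ∂μ) + t ^ 2 * ∫ ω, Y i ω ^ 2 ∂μ) := by
        refine Finset.prod_le_prod (fun i _ => integral_nonneg fun ω => (Real.exp_pos _).le)
          (fun i hi => ?_)
        exact hexpm i (Finset.mem_Icc.1 hi).1
      have e4 : ∏ i ∈ Finset.Icc 1 k, Real.exp (t * (∫ ω, Y i ω ∂μ) + t ^ 2 * ∫ ω, Y i ω ^ 2 ∂μ)
          = Real.exp (∑ i ∈ Finset.Icc 1 k, (t * (∫ ω, Y i ω ∂μ) + t ^ 2 * ∫ ω, Y i ω ^ 2 ∂μ)) :=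
        (Real.exp_sum _ _).symm
      have hXsum : ∑ i ∈ Finset.Icc 1 k, ∫ ω, X i ω ^ 2 ∂μ ≤ CB * n := by
        calc ∑ i ∈ Finset.Icc 1 k, ∫ ω, X i ω ^ 2 ∂μ ≤ CB * k := hCB k
          _ ≤ CB * n := by
            have : (k:ℝ) ≤ n := by exact_mod_cast hkn
            nlinarith
      have e5 : ∑ i ∈ Finset.Icc 1 k, (t * (∫ ω, Y i ω ∂μ) + t ^ 2 * ∫ ω, Y i ω ^ 2 ∂μ) ≤
          2 * CB * n * t ^ 2 := by
        rw [Finset.sum_add_distrib, ← Finset.mul_sum, ← Finset.mul_sum]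
        have hsum1 : ∑ i ∈ Finset.Icc 1 k, ∫ ω, Y i ω ∂μ ≤ CB * n * t := by
          calc ∑ i ∈ Finset.Icc 1 k, ∫ ω, Y i ω ∂μ
              ≤ ∑ i ∈ Finset.Icc 1 k, (∫ ω, X i ω ^ 2 ∂μ) / b :=
                Finset.sum_le_sum fun i hi =>
                  (le_abs_self _).trans (hm i (Finset.mem_Icc.1 hi).1)
            _ = (∑ i ∈ Finset.Icc 1 k, ∫ ω, X i ω ^ 2 ∂μ) / b := by
                rw [Finset.sum_div]
            _ ≤ CB * n / b := by
                apply div_le_div_of_nonneg_right hXsum hbpos.le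
            _ = CB * n * t := by
                rw [div_eq_mul_inv]
                congr 1
                rw [htdef, hbdef]
                field_simp
        have hsum2 : ∑ i ∈ Finset.Icc 1 k, ∫ ω, Y i ω ^ 2 ∂μ ≤ CB * n := by
          calc ∑ i ∈ Finset.Icc 1 k, ∫ ω, Y i ω ^ 2 ∂μ
              ≤ ∑ i ∈ Finset.Icc 1 k, ∫ ω, X i ω ^ 2 ∂μ :=
                Finset.sum_le_sum fun i hi => hs i (Finset.mem_Icc.1 hi).1
            _ ≤ CB * n := hXsum
        nlinarith [sq_nonneg t]
      calc ∫ ω, Real.exp (t * ∑ i ∈ Finset.Icc 1 k, Y i ω) ∂μ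
          = ∫ ω, ∏ i ∈ Finset.Icc 1 k, Real.exp (t * trc b (X i ω)) ∂μ := e1
        _ ≤ ∏ i ∈ Finset.Icc 1 k, ∫ ω, Real.exp (t * trc b (X i ω)) ∂μ := e2
        _ ≤ ∏ i ∈ Finset.Icc 1 k, Real.exp (t * (∫ ω, Y i ω ∂μ) + t ^ 2 * ∫ ω, Y i ω ^ 2 ∂μ) := e3
        _ = Real.exp (∑ i ∈ Finset.Icc 1 k, (t * (∫ ω, Y i ω ∂μ) + t ^ 2 * ∫ ω, Y i ω ^ 2 ∂μ)) := e4
        _ ≤ Real.exp (2 * CB * n * t ^ 2) := Real.exp_le_exp.2 e5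
    have hεpos : 0 < Real.exp (t * ((n:ℝ) * x)) := Real.exp_pos _
    have hfinal : (μ {ω | Real.exp (t * ((n:ℝ) * x)) ≤
          Real.exp (t * ∑ i ∈ Finset.Icc 1 k, Y i ω)}).toReal ≤
        Real.exp (2 * CB * n * t ^ 2) / Real.exp (t * ((n:ℝ) * x)) := by
      rw [le_div_iff₀ hεpos]
      calc (μ _).toReal * Real.exp (t * ((n:ℝ) * x))
          = Real.exp (t * ((n:ℝ) * x)) * (μ _).toReal := by ring
        _ ≤ ∫ ω, Real.exp (t * ∑ i ∈ Finset.Icc 1 k, Y i ω) ∂μ := hmark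
        _ ≤ Real.exp (2 * CB * n * t ^ 2) := hintbound
    have htnx : t * ((n:ℝ) * x) = p * L := by
      rw [htdef]; field_simp
    have hexpM : 2 * CB * (n:ℝ) * t ^ 2 ≤ M := by
      have e1 : t ^ 2 * x ^ 2 * (n:ℝ) ^ 2 = p ^ 2 * L ^ 2 := by
        rw [htdef]; field_simp
      have h2 : 2 * CB * (n:ℝ) * t ^ 2 * x ^ 2 * (n:ℝ) = 2 * CB * (p ^ 2 * L ^ 2) := by
        rw [← e1]; ring
      have h3 : 2 * CB * (p ^ 2 * L ^ 2) ≤ 2 * CB * p ^ 2 * (4 * n) := by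
        have := mul_le_mul_of_nonneg_left hsq (by positivity : (0:ℝ) ≤ 2 * CB * p ^ 2)
        linarith
      rw [hM, le_div_iff₀ (by positivity : (0:ℝ) < x ^ 2)]
      nlinarith [hnpos, h2, h3]
    have hrpow : (n:ℝ) ^ (-p) = Real.exp (-(p * L)) := by
      rw [Real.rpow_def_of_pos hnpos, hLdef]
      congr 1
      ring
    calc (μ {ω | (n:ℝ) * x < ∑ i ∈ Finset.Icc 1 k, Y i ω}).toReal
        ≤ Real.exp (2 * CB * n * t ^ 2) / Real.exp (t * ((n:ℝ) * x)) := hmono.trans hfinal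
      _ ≤ Real.exp M / Real.exp (t * ((n:ℝ) * x)) := by
          apply div_le_div_of_nonneg_right (Real.exp_le_exp.2 hexpM) hεpos.le
      _ = Real.exp M * (n:ℝ) ^ (-p) := by
          rw [htnx, hrpow, ← Real.exp_sub, ← Real.exp_add]
          congr 1
  -- tail bound for each i
  have hbp_pos : 0 < b ^ p := Real.rpow_pos_of_pos hbpos p
  have key2 : ∀ i ∈ Finset.Icc 1 n, (μ {ω | b < |X i ω|}).toReal ≤
      weakMoment μ p (X i) / b ^ p := by
    intro i hi
    have hmem : b ^ p * (μ {ω | b < |X i ω|}).toReal ∈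
        {r : ℝ | ∃ y : ℝ, 0 < y ∧ r = y ^ p * (μ {ω | y < |X i ω|}).toReal} :=
      ⟨b, hbpos, rfl⟩
    have hle := le_csSup (hA i (Finset.mem_Icc.1 hi).1) hmem
    rw [le_div_iff₀ hbp_pos]
    calc (μ {ω | b < |X i ω|}).toReal * b ^ p
        = b ^ p * (μ {ω | b < |X i ω|}).toReal := by ring
      _ ≤ weakMoment μ p (X i) := hle
  -- decomposition
  have hTsub : {ω | ∃ k ∈ Finset.Icc 1 n, (n:ℝ) * x < pSum X k ω} ⊆
      (⋃ i ∈ Finset.Icc 1 n, {ω | b < |X i ω|}) ∪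
        ⋃ k ∈ Finset.Icc 1 n, {ω | (n:ℝ) * x < ∑ i ∈ Finset.Icc 1 k, Y i ω} := by
    rintro ω ⟨k, hk, hkx⟩
    by_cases hcase : ∀ i ∈ Finset.Icc 1 n, |X i ω| ≤ b
    · right
      refine Set.mem_biUnion hk ?_
      have heq : ∑ i ∈ Finset.Icc 1 k, Y i ω = pSum X k ω := by
        refine Finset.sum_congr rfl fun i hi => ?_
        refine trc_eq (hcase i ?_)
        rw [Finset.mem_Icc] at hi ⊢
        exact ⟨hi.1, hi.2.trans (Finset.mem_Icc.1 hk).2⟩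
      simp only [Set.mem_setOf_eq, heq]
      exact hkx
    · left
      push_neg at hcase
      obtain ⟨i, hi, hbi⟩ := hcase
      exact Set.mem_biUnion hi hbi
  have hμ : μ {ω | ∃ k ∈ Finset.Icc 1 n, (n:ℝ) * x < pSum X k ω} ≤
      (∑ i ∈ Finset.Icc 1 n, μ {ω | b < |X i ω|}) +
        ∑ k ∈ Finset.Icc 1 n, μ {ω | (n:ℝ) * x < ∑ i ∈ Finset.Icc 1 k, Y i ω} :=
    (measure_mono hTsub).trans ((measure_union_le _ _).trans
      (add_le_add (measure_biUnion_finset_le _ _) (measure_biUnion_finset_le _ _)))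
  have hne1 : (∑ i ∈ Finset.Icc 1 n, μ {ω | b < |X i ω|}) ≠ ⊤ :=
    (ENNReal.sum_lt_top.2 fun i _ => measure_lt_top μ _).ne
  have hne2 : (∑ k ∈ Finset.Icc 1 n, μ {ω | (n:ℝ) * x < ∑ i ∈ Finset.Icc 1 k, Y i ω}) ≠ ⊤ :=
    (ENNReal.sum_lt_top.2 fun k _ => measure_lt_top μ _).ne
  have hT1 : (μ {ω | ∃ k ∈ Finset.Icc 1 n, (n:ℝ) * x < pSum X k ω}).toReal ≤
      (∑ i ∈ Finset.Icc 1 n, (μ {ω | b < |X i ω|}).toReal) +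
        ∑ k ∈ Finset.Icc 1 n, (μ {ω | (n:ℝ) * x < ∑ i ∈ Finset.Icc 1 k, Y i ω}).toReal := by
    have := ENNReal.toReal_mono (by rw [Ne, ENNReal.add_eq_top]; tauto) hμ
    rwa [ENNReal.toReal_add hne1 hne2, ENNReal.toReal_sum (fun i _ => measure_ne_top μ _),
      ENNReal.toReal_sum (fun k _ => measure_ne_top μ _)] at this
  -- bound the two sums
  have hsum1 : ∑ i ∈ Finset.Icc 1 n, (μ {ω | b < |X i ω|}).toReal ≤ CA * n / b ^ p := by
    calc ∑ i ∈ Finset.Icc 1 n, (μ {ω | b < |X i ω|}).toReal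
        ≤ ∑ i ∈ Finset.Icc 1 n, weakMoment μ p (X i) / b ^ p := Finset.sum_le_sum key2
      _ = (∑ i ∈ Finset.Icc 1 n, weakMoment μ p (X i)) / b ^ p := by rw [Finset.sum_div]
      _ ≤ CA * n / b ^ p := div_le_div_of_nonneg_right (hCA n) hbp_pos.le
  have hsum2 : ∑ k ∈ Finset.Icc 1 n, (μ {ω | (n:ℝ) * x <
        ∑ i ∈ Finset.Icc 1 k, Y i ω}).toReal ≤ (n:ℝ) * (Real.exp M * (n:ℝ) ^ (-p)) := by
    calc ∑ k ∈ Finset.Icc 1 n, (μ {ω | (n:ℝ) * x < ∑ i ∈ Finset.Icc 1 k, Y i ω}).toReal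
        ≤ ∑ _k ∈ Finset.Icc 1 n, Real.exp M * (n:ℝ) ^ (-p) := Finset.sum_le_sum key1
      _ = (n:ℝ) * (Real.exp M * (n:ℝ) ^ (-p)) := by
          rw [Finset.sum_const, Nat.card_Icc]
          simp [mul_comm]
  -- rpow algebra
  have hnp_pos : 0 < (n:ℝ) ^ p := Real.rpow_pos_of_pos hnpos p
  have hLp_pos : 0 < L ^ p := Real.rpow_pos_of_pos hLpos p
  have hxp_pos : 0 < x ^ p := Real.rpow_pos_of_pos hx p
  have hpp_pos : 0 < p ^ p := Real.rpow_pos_of_pos hp0 p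
  have hnp1 : (n:ℝ) ^ (p - 1) = (n:ℝ) ^ p / (n:ℝ) := by
    rw [Real.rpow_sub hnpos, Real.rpow_one]
  have hblog : b ^ p = ((n:ℝ) * x) ^ p / (p * L) ^ p :=
    Real.div_rpow (by positivity) (by positivity) p
  have h_nx : ((n:ℝ) * x) ^ p = (n:ℝ) ^ p * x ^ p := Real.mul_rpow hnpos.le hx.le
  have h_pL : (p * L) ^ p = p ^ p * L ^ p := Real.mul_rpow hp0.le hLpos.le
  have h_px : (p / x) ^ p = p ^ p / x ^ p := Real.div_rpow hp0.le hx.le p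
  have hterm1 : CA * n / b ^ p = CA * (p / x) ^ p * L ^ p / (n:ℝ) ^ (p - 1) := by
    rw [hblog, h_nx, h_pL, h_px, hnp1]
    field_simp
  have hnegp : (n:ℝ) ^ (-p) = 1 / (n:ℝ) ^ p := by
    rw [Real.rpow_neg hnpos.le, one_div]
  have hterm2 : (n:ℝ) * (Real.exp M * (n:ℝ) ^ (-p)) ≤
      Real.exp M / Real.log 2 ^ p * L ^ p / (n:ℝ) ^ (p - 1) := by
    have hlp : Real.log 2 ^ p ≤ L ^ p := Real.rpow_le_rpow hlog2.le hL2 hp0.le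
    have hl2p : 0 < Real.log 2 ^ p := Real.rpow_pos_of_pos hlog2 p
    have e2 : (n:ℝ) * (Real.exp M * (n:ℝ) ^ (-p)) = Real.exp M / (n:ℝ) ^ (p - 1) := by
      rw [hnegp, hnp1]
      field_simp
    rw [e2]
    rw [div_le_div_iff₀ (by rw [hnp1]; positivity) (by rw [hnp1]; positivity)]
    have h1 : Real.exp M * Real.log 2 ^ p ≤ Real.exp M * L ^ p :=
      mul_le_mul_of_nonneg_left hlp (Real.exp_pos _).le
    calc Real.exp M * (n:ℝ) ^ (p - 1)
        = Real.exp M * Real.log 2 ^ p * ((n:ℝ) ^ (p - 1) / Real.log 2 ^ p) := by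
          field_simp
      _ ≤ Real.exp M * L ^ p * ((n:ℝ) ^ (p - 1) / Real.log 2 ^ p) := by
          apply mul_le_mul_of_nonneg_right h1
          positivity
      _ = Real.exp M / Real.log 2 ^ p * L ^ p * (n:ℝ) ^ (p - 1) := by
          field_simp
          try ring
  calc (μ {ω | ∃ k ∈ Finset.Icc 1 n, (n:ℝ) * x < pSum X k ω}).toReal
      ≤ (∑ i ∈ Finset.Icc 1 n, (μ {ω | b < |X i ω|}).toReal) +
          ∑ k ∈ Finset.Icc 1 n, (μ {ω | (n:ℝ) * x < ∑ i ∈ Finset.Icc 1 k, Y i ω}).toReal := hT1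
    _ ≤ CA * n / b ^ p + (n:ℝ) * (Real.exp M * (n:ℝ) ^ (-p)) := add_le_add hsum1 hsum2
    _ ≤ CA * (p / x) ^ p * L ^ p / (n:ℝ) ^ (p - 1) +
          Real.exp M / Real.log 2 ^ p * L ^ p / (n:ℝ) ^ (p - 1) := by
        rw [hterm1]
        exact add_le_add le_rfl hterm2
    _ = (CA * (p / x) ^ p + Real.exp M / Real.log 2 ^ p) * L ^ p / (n:ℝ) ^ (p - 1) := by
        ring
end

section
/- Let p ∈ (0,1) and let {X_i, i ≥ 1} be a sequence of NA random variables with E[X_i] = 0 for all i, such that K_n := Σ_{i=1}^n E[X_i² exp{|X_i|^p}] satisfies 1 ≤ K_n ≤ Cn for all n for some constant C ≥ 1. Then for any 0 < α < 1 there exists a positive constant c, not depending on n, such that for any x > 0 and all sufficiently large n, P(max_{1≤k≤n} S_k ≥ nx) ≤ 2(1 − α)^{−1} exp{ −c α^p x^p n^p }. -/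
open MeasureTheory Finset

lemma int_exp_sum {Ω : Type*} [MeasurableSpace Ω] (μ : Measure Ω) [IsProbabilityMeasure μ]
    (X : ℕ → Ω → ℝ) (hmeas : ∀ i, Measurable (X i)) (t b : ℝ) (ht : 0 < t) (s : Finset ℕ) :
    Integrable (fun ω => Real.exp (t * ∑ i ∈ s, min (X i ω) b)) μ := by
  have hm : Measurable (fun ω => Real.exp (t * ∑ i ∈ s, min (X i ω) b)) := by
    apply Real.measurable_exp.comp
    exact (Finset.measurable_sum s (fun i _ => (hmeas i).min measurable_const)).const_mul t
  refine (integrable_const (Real.exp (t * (s.card * b)))).mono' hm.aestronglyMeasurable ?_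
  filter_upwards with ω
  rw [Real.norm_eq_abs, abs_of_pos (Real.exp_pos _)]
  apply Real.exp_le_exp.mpr
  apply mul_le_mul_of_nonneg_left _ ht.le
  calc ∑ i ∈ s, min (X i ω) b ≤ ∑ i ∈ s, b := Finset.sum_le_sum fun i _ => min_le_right _ _
    _ = s.card * b := by rw [Finset.sum_const, nsmul_eq_mul]

set_option maxHeartbeats 1000000 in
lemma na_mgf {Ω : Type*} [MeasurableSpace Ω] (μ : Measure Ω) [IsProbabilityMeasure μ]
    (X : ℕ → Ω → ℝ) (hmeas : ∀ i, Measurable (X i)) (hNA : NegAssoc μ X)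
    (t b : ℝ) (ht : 0 < t) :
    ∀ k : ℕ, ∫ ω, Real.exp (t * ∑ i ∈ Finset.Icc 1 k, min (X i ω) b) ∂μ ≤
      ∏ i ∈ Finset.Icc 1 k, ∫ ω, Real.exp (t * min (X i ω) b) ∂μ := by
  intro k
  induction k with
  | zero => simp
  | succ k ih =>
    have hins : Finset.Icc 1 (k+1) = insert (k+1) (Finset.Icc 1 k) := by
      ext i; simp [Finset.mem_Icc]; omega
    have hnotmem : (k+1) ∉ Finset.Icc 1 k := by simp
    have hmem : (k+1) ∈ ({k+1} : Finset ℕ) := by simp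
    have hmono1 : Monotone (fun v : ↥(Finset.Icc 1 k) → ℝ =>
        Real.exp (t * ∑ i ∈ (Finset.Icc 1 k).attach, min (v i) b)) := by
      intro v w hvw
      apply Real.exp_le_exp.mpr
      exact mul_le_mul_of_nonneg_left
        (Finset.sum_le_sum fun i _ => min_le_min (hvw i) le_rfl) ht.le
    have hmono2 : Monotone (fun v : ↥({k+1} : Finset ℕ) → ℝ =>
        Real.exp (t * min (v ⟨k+1, hmem⟩) b)) := by
      intro v w hvw
      exact Real.exp_le_exp.mpr (mul_le_mul_of_nonneg_left (min_le_min (hvw _) le_rfl) ht.le)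
    have e1 : ∀ ω, (∑ i ∈ (Finset.Icc 1 k).attach, min (X i.1 ω) b) =
        ∑ i ∈ Finset.Icc 1 k, min (X i ω) b := by
      intro ω
      exact Finset.sum_attach (Finset.Icc 1 k) (fun i => min (X i ω) b)
    have hint1 : Integrable (fun ω => Real.exp (t * ∑ i ∈ (Finset.Icc 1 k).attach,
        min (X i.1 ω) b)) μ := by
      simp only [e1]
      exact int_exp_sum μ X hmeas t b ht _
    have hint2 : Integrable (fun ω => Real.exp (t * min (X (k+1) ω) b)) μ := by
      have := int_exp_sum μ X hmeas t b ht {k+1}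
      simpa using this
    have e2 : ∀ ω, Real.exp (t * ∑ i ∈ Finset.Icc 1 k, min (X i ω) b) *
        Real.exp (t * min (X (k+1) ω) b) =
        Real.exp (t * ∑ i ∈ Finset.Icc 1 (k+1), min (X i ω) b) := by
      intro ω
      rw [← Real.exp_add, hins, Finset.sum_insert hnotmem]
      ring_nf
    have hint12 : Integrable (fun ω => Real.exp (t * ∑ i ∈ (Finset.Icc 1 k).attach,
        min (X i.1 ω) b) * Real.exp (t * min (X (k+1) ω) b)) μ := by
      simp only [e1, e2]
      exact int_exp_sum μ X hmeas t b ht _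
    have key := hNA (Finset.Icc 1 k) {k+1}
      (fun i hi => (Finset.mem_Icc.mp hi).1) (by simp)
      (by simp [Finset.disjoint_singleton_right])
      (fun v => Real.exp (t * ∑ i ∈ (Finset.Icc 1 k).attach, min (v i) b))
      (fun v => Real.exp (t * min (v ⟨k+1, hmem⟩) b))
      hmono1 hmono2 hint1 hint2 hint12
    simp only [e1, e2] at key
    calc ∫ ω, Real.exp (t * ∑ i ∈ Finset.Icc 1 (k+1), min (X i ω) b) ∂μ
        ≤ (∫ ω, Real.exp (t * ∑ i ∈ Finset.Icc 1 k, min (X i ω) b) ∂μ) *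
          ∫ ω, Real.exp (t * min (X (k+1) ω) b) ∂μ := key
      _ ≤ (∏ i ∈ Finset.Icc 1 k, ∫ ω, Real.exp (t * min (X i ω) b) ∂μ) *
          ∫ ω, Real.exp (t * min (X (k+1) ω) b) ∂μ := by
          apply mul_le_mul_of_nonneg_right ih
          exact integral_nonneg fun ω => (Real.exp_pos _).le
      _ = ∏ i ∈ Finset.Icc 1 (k+1), ∫ ω, Real.exp (t * min (X i ω) b) ∂μ := by
          rw [hins, Finset.prod_insert hnotmem]; ring

lemma exp_quad (u M : ℝ) (h : max u 0 ≤ M) : Real.exp u ≤ 1 + u + u^2 * Real.exp M := by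
  have hM : (0:ℝ) ≤ M := le_trans (le_max_right _ _) h
  have h1 : 1 - u ≤ Real.exp (-u) := by linarith [Real.add_one_le_exp (-u)]
  have h2 : Real.exp u * Real.exp (-u) = 1 := by rw [← Real.exp_add]; simp
  rcases le_total u 0 with hu | hu
  · have key : Real.exp u ≤ 1 + u + u^2 := by
      nlinarith [Real.exp_pos u, Real.exp_pos (-u)]
    have : (1:ℝ) ≤ Real.exp M := Real.one_le_exp hM
    nlinarith [sq_nonneg u]
  · have hum : u ≤ M := le_trans (le_max_left _ _) h
    have key : Real.exp u ≤ 1 + u + u^2 * Real.exp u := by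
      nlinarith [Real.exp_pos u, Real.exp_pos (-u)]
    have : Real.exp u ≤ Real.exp M := Real.exp_le_exp.mpr hum
    nlinarith [sq_nonneg u]

-- pointwise bound
lemma pointwise_bound (x b t p : ℝ) (hb : 0 < b) (ht : 0 < t) (htb : t ≤ b ^ (p - 1))
    (hp0 : 0 < p) (hp1 : p < 1) :
    Real.exp (t * min x b) ≤ 1 + t * min x b + t^2 * (x^2 * Real.exp (|x| ^ p)) := by
  have hmax : max (t * min x b) 0 ≤ |x| ^ p := by
    rcases le_total (min x b) 0 with hy | hy
    · have : t * min x b ≤ 0 := mul_nonpos_of_nonneg_of_nonpos ht.le hy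
      simpa [max_eq_right this] using Real.rpow_nonneg (abs_nonneg x) p
    · have hy' : 0 ≤ min x b := hy
      have h1 : t * min x b ≤ b ^ (p-1) * min x b :=
        mul_le_mul_of_nonneg_right htb hy'
      rcases eq_or_lt_of_le hy' with hy0 | hy0
      · rw [max_le_iff]
        constructor
        · rw [← hy0] at h1 ⊢
          simpa using le_trans h1 (by simp [Real.rpow_nonneg (abs_nonneg x) p])
        · exact Real.rpow_nonneg (abs_nonneg x) p
      · have h2 : b ^ (p-1) ≤ (min x b) ^ (p-1) :=
          Real.rpow_le_rpow_of_nonpos hy0 (min_le_right x b) (by linarith)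
        have h3 : (min x b) ^ (p-1) * min x b = (min x b) ^ p := by
          nth_rewrite 2 [← Real.rpow_one (min x b)]
          rw [← Real.rpow_add hy0]; ring_nf
        have h4 : (min x b) ^ p ≤ |x| ^ p := by
          apply Real.rpow_le_rpow hy' _ hp0.le
          exact le_trans (min_le_left x b) (le_abs_self x)
        have : t * min x b ≤ |x| ^ p := by
          calc t * min x b ≤ b ^ (p-1) * min x b := h1
            _ ≤ (min x b) ^ (p-1) * min x b := mul_le_mul_of_nonneg_right h2 hy'
            _ = (min x b) ^ p := h3
            _ ≤ |x| ^ p := h4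
        exact max_le this (Real.rpow_nonneg (abs_nonneg x) p)
  have hsq : (min x b)^2 ≤ x^2 := by
    rcases le_total x b with hxb | hxb
    · rw [min_eq_left hxb]
    · rw [min_eq_right hxb]; nlinarith
  have := exp_quad (t * min x b) (|x| ^ p) hmax
  have hexp : (0:ℝ) < Real.exp (|x| ^ p) := Real.exp_pos _
  calc Real.exp (t * min x b) ≤ 1 + t * min x b + (t * min x b)^2 * Real.exp (|x| ^ p) := this
    _ ≤ 1 + t * min x b + t^2 * (x^2 * Real.exp (|x| ^ p)) := by
        have h5 : (t * min x b)^2 * Real.exp (|x| ^ p) ≤ t^2 * (x^2 * Real.exp (|x| ^ p)) := by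
          rw [mul_pow, ← mul_assoc]
          gcongr
        linarith

lemma mgf_bound {Ω : Type*} [MeasurableSpace Ω] (μ : Measure Ω) [IsProbabilityMeasure μ]
    (X : ℕ → Ω → ℝ) (hmeas : ∀ i, Measurable (X i))
    (hint : ∀ i, 1 ≤ i → Integrable (X i) μ)
    (hmean : ∀ i, 1 ≤ i → ∫ ω, X i ω ∂μ = 0)
    (p : ℝ) (hp0 : 0 < p) (hp1 : p < 1)
    (hintK : ∀ i, 1 ≤ i → Integrable (fun ω => X i ω ^ 2 * Real.exp (|X i ω| ^ p)) μ)
    (b t : ℝ) (hb : 0 < b) (ht : 0 < t) (htb : t ≤ b ^ (p - 1))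
    (i : ℕ) (hi : 1 ≤ i) :
    ∫ ω, Real.exp (t * min (X i ω) b) ∂μ ≤
      1 + t^2 * ∫ ω, X i ω ^ 2 * Real.exp (|X i ω| ^ p) ∂μ := by
  have hYint : Integrable (fun ω => min (X i ω) b) μ := by
    refine ((hint i hi).abs.add (integrable_const |b|)).mono'
      ((hmeas i).min measurable_const).aestronglyMeasurable ?_
    filter_upwards with ω
    simp only [Pi.add_apply]
    rw [Real.norm_eq_abs]
    rcases le_total (X i ω) b with h | h
    · rw [min_eq_left h]; linarith [abs_nonneg b]
    · rw [min_eq_right h]; linarith [abs_nonneg (X i ω)]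
  have hLint : Integrable (fun ω => Real.exp (t * min (X i ω) b)) μ := by
    have := int_exp_sum μ X hmeas t b ht {i}
    simpa using this
  have hI1 : Integrable (fun ω => 1 + t * min (X i ω) b) μ :=
    (integrable_const 1).add (hYint.const_mul t)
  have hI2 : Integrable (fun ω => t^2 * (X i ω ^ 2 * Real.exp (|X i ω| ^ p))) μ :=
    (hintK i hi).const_mul (t^2)
  have hI0 : Integrable (fun ω => t * min (X i ω) b) μ := hYint.const_mul t
  have hRint : Integrable
      (fun ω => 1 + t * min (X i ω) b + t^2 * (X i ω ^ 2 * Real.exp (|X i ω| ^ p))) μ :=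
    hI1.add hI2
  have hmono := integral_mono hLint hRint
    (fun ω => pointwise_bound (X i ω) b t p hb ht htb hp0 hp1)
  have hsplit : ∫ ω, (1 + t * min (X i ω) b + t^2 * (X i ω ^ 2 * Real.exp (|X i ω| ^ p))) ∂μ =
      1 + t * (∫ ω, min (X i ω) b ∂μ) +
        t^2 * ∫ ω, X i ω ^ 2 * Real.exp (|X i ω| ^ p) ∂μ := by
    rw [integral_add hI1 hI2, integral_add (integrable_const 1) hI0,
      MeasureTheory.integral_const_mul, MeasureTheory.integral_const_mul, integral_const]
    simp
  have hY0 : ∫ ω, min (X i ω) b ∂μ ≤ 0 := by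
    have := integral_mono hYint (hint i hi) (fun ω => min_le_left _ _)
    rw [hmean i hi] at this
    exact this
  rw [hsplit] at hmono
  nlinarith [ht.le, mul_nonneg ht.le (neg_nonneg.mpr hY0)]

lemma markov1 {Ω : Type*} [MeasurableSpace Ω] (μ : Measure Ω) [IsProbabilityMeasure μ]
    (Y : Ω → ℝ) (hmeas : Measurable Y) (p b : ℝ) (hb : 0 < b) (hp0 : 0 < p)
    (hK : Integrable (fun ω => Y ω ^ 2 * Real.exp (|Y ω| ^ p)) μ) :
    (μ {ω | b < Y ω}).toReal ≤
      (∫ ω, Y ω ^ 2 * Real.exp (|Y ω| ^ p) ∂μ) / (b^2 * Real.exp (b ^ p)) := by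
  set ε := b^2 * Real.exp (b ^ p) with hε
  have hεpos : 0 < ε := mul_pos (by positivity) (Real.exp_pos _)
  have hsub : {ω | b < Y ω} ⊆ {ω | ε ≤ Y ω ^ 2 * Real.exp (|Y ω| ^ p)} := by
    intro ω hω
    simp only [Set.mem_setOf_eq] at hω ⊢
    have h1 : b^2 ≤ Y ω ^ 2 := by nlinarith
    have h2 : Real.exp (b ^ p) ≤ Real.exp (|Y ω| ^ p) := by
      apply Real.exp_le_exp.mpr
      apply Real.rpow_le_rpow hb.le _ hp0.le
      rw [abs_of_pos (lt_trans hb hω)]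
      exact hω.le
    calc ε = b^2 * Real.exp (b ^ p) := rfl
      _ ≤ Y ω ^ 2 * Real.exp (|Y ω| ^ p) := by
          apply mul_le_mul h1 h2 (Real.exp_pos _).le (sq_nonneg _)
  have hmarkov := mul_meas_ge_le_integral_of_nonneg
    (ae_of_all μ (fun ω => mul_nonneg (sq_nonneg (Y ω)) (Real.exp_pos _).le)) hK ε
  have hmono : (μ {ω | b < Y ω}).toReal ≤
      (μ {ω | ε ≤ Y ω ^ 2 * Real.exp (|Y ω| ^ p)}).toReal :=
    ENNReal.toReal_mono (measure_ne_top μ _) (measure_mono hsub)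
  refine le_trans hmono ((le_div_iff₀ hεpos).mpr ?_)
  calc (μ {ω | ε ≤ Y ω ^ 2 * Real.exp (|Y ω| ^ p)}).toReal * ε
      = ε * (μ {ω | ε ≤ Y ω ^ 2 * Real.exp (|Y ω| ^ p)}).toReal := mul_comm _ _
    _ ≤ _ := hmarkov

set_option maxHeartbeats 1000000 in
/-- Remark (2.60): for `p ∈ (0,1)`, centered NA random variables with
`K_n := ∑_{i=1}^n E[X_i² exp{|X_i|^p}]` satisfying `1 ≤ K_n ≤ Cn`, for any `0 < α < 1` there
is `c > 0`, not depending on `n`, so that for any `x > 0` and all sufficiently large `n`,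
`P(max_{1≤k≤n} S_k ≥ nx) ≤ 2(1−α)⁻¹ exp{−c α^p x^p n^p}`. -/
theorem stmt12 {Ω : Type*} [MeasurableSpace Ω] (μ : Measure Ω) [IsProbabilityMeasure μ]
    (X : ℕ → Ω → ℝ) (hmeas : ∀ i, Measurable (X i)) (hNA : NegAssoc μ X)
    (hint : ∀ i, 1 ≤ i → Integrable (X i) μ)
    (hmean : ∀ i, 1 ≤ i → ∫ ω, X i ω ∂μ = 0)
    (p : ℝ) (hp0 : 0 < p) (hp1 : p < 1)
    (hintK : ∀ i, 1 ≤ i → Integrable (fun ω => X i ω ^ 2 * Real.exp (|X i ω| ^ p)) μ)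
    (C : ℝ) (hC : 1 ≤ C)
    (hK : ∀ n : ℕ, 1 ≤ n →
      1 ≤ (∑ i ∈ Finset.Icc 1 n, ∫ ω, X i ω ^ 2 * Real.exp (|X i ω| ^ p) ∂μ) ∧
      (∑ i ∈ Finset.Icc 1 n, ∫ ω, X i ω ^ 2 * Real.exp (|X i ω| ^ p) ∂μ) ≤ C * n)
    (α : ℝ) (hα0 : 0 < α) (hα1 : α < 1) :
    ∃ c : ℝ, 0 < c ∧ ∀ x : ℝ, 0 < x → ∃ N : ℕ, ∀ n : ℕ, N ≤ n →
      (μ {ω | ∃ k ∈ Finset.Icc 1 n, (n : ℝ) * x ≤ pSum X k ω}).toReal ≤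
        2 * (1 - α)⁻¹ * Real.exp (-(c * α ^ p * x ^ p * (n : ℝ) ^ p)) := by
  refine ⟨1/4, by norm_num, fun x hx => ?_⟩
  have ha : 0 < α * x := mul_pos hα0 hx
  set a := α * x with hadef
  -- eventual conditions on a real variable
  have hev1 : ∀ᶠ y : ℝ in Filter.atTop, C ≤ a^2 * y := by
    have h : Filter.Tendsto (fun y : ℝ => a^2 * y) Filter.atTop Filter.atTop :=
      Filter.Tendsto.const_mul_atTop (by positivity) Filter.tendsto_id
    exact h.eventually_ge_atTop C
  have hev2 : ∀ᶠ y : ℝ in Filter.atTop, Real.log y ≤ (3/8) * a^p * y^p := by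
    have h := (isLittleO_log_rpow_atTop hp0).def (show (0:ℝ) < (3/8)*a^p by positivity)
    filter_upwards [h, Filter.eventually_ge_atTop (0:ℝ)] with y hy hy0
    have h1 : Real.log y ≤ ‖Real.log y‖ := le_abs_self _
    have h2 : ‖y ^ p‖ = y ^ p := abs_of_nonneg (Real.rpow_nonneg hy0 p)
    rw [h2] at hy
    exact le_trans h1 hy
  have hev3 : ∀ᶠ y : ℝ in Filter.atTop, C * a^(2*p-2) * y^(p-1) < (3/8) * a^p := by
    have h0 : Filter.Tendsto (fun y : ℝ => y ^ (p-1)) Filter.atTop (nhds 0) := by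
      have := tendsto_rpow_neg_atTop (show (0:ℝ) < 1 - p by linarith)
      convert this using 2 with y
      ring_nf
    have h : Filter.Tendsto (fun y : ℝ => C * a^(2*p-2) * y^(p-1)) Filter.atTop (nhds 0) := by
      simpa using h0.const_mul (C * a^(2*p-2))
    exact h.eventually_lt_const (by positivity)
  have hevN : ∀ᶠ n : ℕ in Filter.atTop,
      (1 ≤ n ∧ (C ≤ a^2 * (n:ℝ) ∧ Real.log (n:ℝ) ≤ (3/8) * a^p * (n:ℝ)^p ∧
        C * a^(2*p-2) * (n:ℝ)^(p-1) < (3/8) * a^p)) :=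
    (Filter.eventually_ge_atTop 1).and
      (tendsto_natCast_atTop_atTop.eventually (hev1.and (hev2.and hev3)))
  obtain ⟨N, hN⟩ := Filter.eventually_atTop.mp hevN
  refine ⟨N, fun n hn => ?_⟩
  obtain ⟨hn1, hC2, hlog, hpoly⟩ := hN n hn
  -- real setup
  have hnR : (1:ℝ) ≤ (n:ℝ) := by exact_mod_cast hn1
  have hnpos : (0:ℝ) < (n:ℝ) := by linarith
  set b := a * (n:ℝ) with hbdef
  have hbpos : 0 < b := mul_pos ha hnpos
  set t := b ^ (p-1) with htdef
  have htpos : 0 < t := Real.rpow_pos_of_pos hbpos _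
  have hKnonneg : ∀ i : ℕ, 0 ≤ ∫ ω, X i ω ^ 2 * Real.exp (|X i ω| ^ p) ∂μ := fun i =>
    integral_nonneg fun ω => mul_nonneg (sq_nonneg _) (Real.exp_pos _).le
  obtain ⟨hKS1, hKS2⟩ := hK n hn1
  -- scalar identities
  have hbp : b ^ p = α ^ p * x ^ p * (n:ℝ) ^ p := by
    rw [hbdef, hadef, Real.mul_rpow (by positivity) hnpos.le, Real.mul_rpow hα0.le hx.le]
  have hbppos : 0 < b ^ p := Real.rpow_pos_of_pos hbpos p
  have htb : t * b = b ^ p := by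
    rw [htdef, ← Real.rpow_add_one hbpos.ne' (p-1)]
    congr 1; ring
  have ht2 : t^2 = b ^ (2*p-2) := by
    rw [htdef, sq, ← Real.rpow_add hbpos]
    congr 1; ring
  have htnx : t * ((n:ℝ) * x) = b ^ p / α := by
    have h1 : (n:ℝ) * x = b / α := by
      rw [hbdef, hadef]; field_simp
    rw [h1, ← htb]; field_simp
  have e4 : b ^ p = a ^ p * (n:ℝ) ^ p := by
    rw [hbdef, Real.mul_rpow ha.le hnpos.le]
  -- Term 2 individual bound (Chernoff + NA)
  have hterm2 : ∀ k ∈ Finset.Icc 1 n,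
      (μ {ω | (n:ℝ)*x ≤ ∑ i ∈ Finset.Icc 1 k, min (X i ω) b}).toReal ≤
        Real.exp (t^2*(C*(n:ℝ)) - t*((n:ℝ)*x)) := by
    intro k hk
    have hkn : k ≤ n := (Finset.mem_Icc.mp hk).2
    have hTint := int_exp_sum μ X hmeas t b htpos (Finset.Icc 1 k)
    have hset : {ω | (n:ℝ)*x ≤ ∑ i ∈ Finset.Icc 1 k, min (X i ω) b} =
        {ω | Real.exp (t * ((n:ℝ)*x)) ≤
          Real.exp (t * ∑ i ∈ Finset.Icc 1 k, min (X i ω) b)} := by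
      ext ω
      simp only [Set.mem_setOf_eq, Real.exp_le_exp]
      exact (mul_le_mul_iff_right₀ htpos).symm
    have hmark := mul_meas_ge_le_integral_of_nonneg
      (ae_of_all μ fun ω => (Real.exp_pos _).le) hTint (Real.exp (t * ((n:ℝ)*x)))
    have hprod := na_mgf μ X hmeas hNA t b htpos k
    have hfac : ∀ i ∈ Finset.Icc 1 k, ∫ ω, Real.exp (t * min (X i ω) b) ∂μ ≤
        1 + t^2 * ∫ ω, X i ω ^ 2 * Real.exp (|X i ω| ^ p) ∂μ := fun i hi =>
      mgf_bound μ X hmeas hint hmean p hp0 hp1 hintK b t hbpos htpos le_rfl i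
        (Finset.mem_Icc.mp hi).1
    have hchain : ∫ ω, Real.exp (t * ∑ i ∈ Finset.Icc 1 k, min (X i ω) b) ∂μ ≤
        Real.exp (t^2 * (C * (n:ℝ))) := by
      calc ∫ ω, Real.exp (t * ∑ i ∈ Finset.Icc 1 k, min (X i ω) b) ∂μ
          ≤ ∏ i ∈ Finset.Icc 1 k, ∫ ω, Real.exp (t * min (X i ω) b) ∂μ := hprod
        _ ≤ ∏ i ∈ Finset.Icc 1 k,
              (1 + t^2 * ∫ ω, X i ω ^ 2 * Real.exp (|X i ω| ^ p) ∂μ) :=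
            Finset.prod_le_prod
              (fun i _ => integral_nonneg fun ω => (Real.exp_pos _).le) hfac
        _ ≤ ∏ i ∈ Finset.Icc 1 k,
              Real.exp (t^2 * ∫ ω, X i ω ^ 2 * Real.exp (|X i ω| ^ p) ∂μ) :=
            Finset.prod_le_prod
              (fun i _ => by nlinarith [hKnonneg i, sq_nonneg t])
              (fun i _ => by
                linarith [Real.add_one_le_exp
                  (t^2 * ∫ ω, X i ω ^ 2 * Real.exp (|X i ω| ^ p) ∂μ)])
        _ = Real.exp (∑ i ∈ Finset.Icc 1 k,
              t^2 * ∫ ω, X i ω ^ 2 * Real.exp (|X i ω| ^ p) ∂μ) :=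
            (Real.exp_sum _ _).symm
        _ ≤ Real.exp (∑ i ∈ Finset.Icc 1 n,
              t^2 * ∫ ω, X i ω ^ 2 * Real.exp (|X i ω| ^ p) ∂μ) := by
            apply Real.exp_le_exp.mpr
            refine Finset.sum_le_sum_of_subset_of_nonneg
              (Finset.Icc_subset_Icc_right hkn) (fun i _ _ => ?_)
            exact mul_nonneg (sq_nonneg t) (hKnonneg i)
        _ ≤ Real.exp (t^2 * (C * (n:ℝ))) := by
            apply Real.exp_le_exp.mpr
            rw [← Finset.mul_sum]
            exact mul_le_mul_of_nonneg_left hKS2 (sq_nonneg t)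
    rw [hset]
    have hεpos : (0:ℝ) < Real.exp (t * ((n:ℝ)*x)) := Real.exp_pos _
    have hm2 : (μ {ω | Real.exp (t * ((n:ℝ)*x)) ≤
        Real.exp (t * ∑ i ∈ Finset.Icc 1 k, min (X i ω) b)}).toReal ≤
        (∫ ω, Real.exp (t * ∑ i ∈ Finset.Icc 1 k, min (X i ω) b) ∂μ) /
          Real.exp (t * ((n:ℝ)*x)) := by
      rw [le_div_iff₀ hεpos]
      calc _ = Real.exp (t * ((n:ℝ)*x)) *
            (μ {ω | Real.exp (t * ((n:ℝ)*x)) ≤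
              Real.exp (t * ∑ i ∈ Finset.Icc 1 k, min (X i ω) b)}).toReal := mul_comm _ _
        _ ≤ _ := hmark
    calc _ ≤ (∫ ω, Real.exp (t * ∑ i ∈ Finset.Icc 1 k, min (X i ω) b) ∂μ) /
          Real.exp (t * ((n:ℝ)*x)) := hm2
      _ ≤ Real.exp (t^2 * (C * (n:ℝ))) / Real.exp (t * ((n:ℝ)*x)) := by
          gcongr
      _ = Real.exp (t^2*(C*(n:ℝ)) - t*((n:ℝ)*x)) := by
          rw [Real.exp_sub]
  -- Term 1 individual bound (Markov)
  have hterm1 : ∀ i ∈ Finset.Icc 1 n, (μ {ω | b < X i ω}).toReal ≤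
      (∫ ω, X i ω ^ 2 * Real.exp (|X i ω| ^ p) ∂μ) / (b^2 * Real.exp (b ^ p)) := fun i hi =>
    markov1 μ (X i) (hmeas i) p b hbpos hp0 (hintK i (Finset.mem_Icc.mp hi).1)
  -- event decomposition
  set A := ⋃ i ∈ Finset.Icc 1 n, {ω | b < X i ω} with hAdef
  set B := ⋃ k ∈ Finset.Icc 1 n,
    {ω | (n:ℝ)*x ≤ ∑ i ∈ Finset.Icc 1 k, min (X i ω) b} with hBdef
  have hsub : {ω | ∃ k ∈ Finset.Icc 1 n, (n:ℝ)*x ≤ pSum X k ω} ⊆ A ∪ B := by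
    rintro ω ⟨k, hk, hS⟩
    by_cases hA : ∃ i ∈ Finset.Icc 1 n, b < X i ω
    · obtain ⟨i, hi, hbi⟩ := hA
      exact Or.inl (Set.mem_biUnion hi hbi)
    · push_neg at hA
      refine Or.inr (Set.mem_biUnion hk ?_)
      simp only [Set.mem_setOf_eq]
      have heq : ∑ i ∈ Finset.Icc 1 k, min (X i ω) b = pSum X k ω := by
        rw [pSum]
        refine Finset.sum_congr rfl fun i hi => ?_
        exact min_eq_left (hA i (Finset.Icc_subset_Icc_right (Finset.mem_Icc.mp hk).2 hi))
      rw [heq]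
      exact hS
  -- measure chain
  have hμA : (μ A).toReal ≤ ∑ i ∈ Finset.Icc 1 n, (μ {ω | b < X i ω}).toReal := by
    refine le_trans (ENNReal.toReal_mono ?_
      (measure_biUnion_finset_le (Finset.Icc 1 n) _)) ?_
    · exact (ENNReal.sum_lt_top.mpr fun i _ => measure_lt_top μ _).ne
    · rw [ENNReal.toReal_sum fun i _ => measure_ne_top μ _]
  have hμB : (μ B).toReal ≤ ∑ k ∈ Finset.Icc 1 n,
      (μ {ω | (n:ℝ)*x ≤ ∑ i ∈ Finset.Icc 1 k, min (X i ω) b}).toReal := by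
    refine le_trans (ENNReal.toReal_mono ?_
      (measure_biUnion_finset_le (Finset.Icc 1 n) _)) ?_
    · exact (ENNReal.sum_lt_top.mpr fun i _ => measure_lt_top μ _).ne
    · rw [ENNReal.toReal_sum fun i _ => measure_ne_top μ _]
  have hmain : (μ {ω | ∃ k ∈ Finset.Icc 1 n, (n:ℝ)*x ≤ pSum X k ω}).toReal ≤
      (μ A).toReal + (μ B).toReal := by
    have h1 : μ {ω | ∃ k ∈ Finset.Icc 1 n, (n:ℝ)*x ≤ pSum X k ω} ≤ μ A + μ B :=
      le_trans (measure_mono hsub) (measure_union_le A B)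
    refine le_trans (ENNReal.toReal_mono ?_ h1) ?_
    · exact (ENNReal.add_lt_top.mpr ⟨measure_lt_top μ _, measure_lt_top μ _⟩).ne
    · rw [ENNReal.toReal_add (measure_ne_top μ _) (measure_ne_top μ _)]
  -- bound term 1 total
  have hT1 : ∑ i ∈ Finset.Icc 1 n, (μ {ω | b < X i ω}).toReal ≤ Real.exp (-(b^p)) := by
    have hsum : ∑ i ∈ Finset.Icc 1 n, (μ {ω | b < X i ω}).toReal ≤
        (∑ i ∈ Finset.Icc 1 n, ∫ ω, X i ω ^ 2 * Real.exp (|X i ω| ^ p) ∂μ) /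
          (b^2 * Real.exp (b ^ p)) := by
      rw [Finset.sum_div]
      exact Finset.sum_le_sum hterm1
    have hden : (0:ℝ) < b^2 * Real.exp (b ^ p) := by positivity
    have hCn : C * (n:ℝ) ≤ b^2 := by
      have : b^2 = a^2 * (n:ℝ)^2 := by rw [hbdef]; ring
      rw [this]
      nlinarith
    have h2 : (∑ i ∈ Finset.Icc 1 n, ∫ ω, X i ω ^ 2 * Real.exp (|X i ω| ^ p) ∂μ) /
        (b^2 * Real.exp (b ^ p)) ≤ b^2 / (b^2 * Real.exp (b ^ p)) := by
      gcongr
      linarith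
    have h3 : b^2 / (b^2 * Real.exp (b ^ p)) = Real.exp (-(b^p)) := by
      rw [Real.exp_neg]
      field_simp
    linarith
  -- bound term 2 total
  have hT2 : ∑ k ∈ Finset.Icc 1 n,
      (μ {ω | (n:ℝ)*x ≤ ∑ i ∈ Finset.Icc 1 k, min (X i ω) b}).toReal ≤
      (n:ℝ) * Real.exp (t^2*(C*(n:ℝ)) - t*((n:ℝ)*x)) := by
    calc _ ≤ ∑ _k ∈ Finset.Icc 1 n, Real.exp (t^2*(C*(n:ℝ)) - t*((n:ℝ)*x)) :=
          Finset.sum_le_sum hterm2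
      _ = (n:ℝ) * Real.exp (t^2*(C*(n:ℝ)) - t*((n:ℝ)*x)) := by
          rw [Finset.sum_const, Nat.card_Icc]
          simp [nsmul_eq_mul]
  -- final arithmetic
  have hkey : Real.log (n:ℝ) + (t^2*(C*(n:ℝ)) - t*((n:ℝ)*x)) ≤ -(1/4 * b^p) := by
    have h1 : b ^ p ≤ t * ((n:ℝ)*x) := by
      rw [htnx, le_div_iff₀ hα0]
      nlinarith
    have h2 : t^2*(C*(n:ℝ)) ≤ (3/8) * b^p := by
      rw [ht2]
      have e1 : b ^ (2*p-2) = a^(2*p-2) * (n:ℝ)^(2*p-2) := by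
        rw [hbdef, Real.mul_rpow ha.le hnpos.le]
      have e23 : (n:ℝ)^(2*p-2) * (n:ℝ) = (n:ℝ)^(p-1) * (n:ℝ)^p := by
        rw [← Real.rpow_add hnpos, ← Real.rpow_add_one hnpos.ne']
        congr 1; ring
      have comp : b ^ (2*p-2) * (C*(n:ℝ)) =
          (C * a^(2*p-2) * (n:ℝ)^(p-1)) * ((n:ℝ)^p) := by
        rw [e1]
        calc a^(2*p-2) * (n:ℝ)^(2*p-2) * (C*(n:ℝ))
            = C * a^(2*p-2) * ((n:ℝ)^(2*p-2) * (n:ℝ)) := by ring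
          _ = C * a^(2*p-2) * ((n:ℝ)^(p-1) * (n:ℝ)^p) := by rw [e23]
          _ = (C * a^(2*p-2) * (n:ℝ)^(p-1)) * ((n:ℝ)^p) := by ring
      rw [comp]
      have hnp : (0:ℝ) ≤ (n:ℝ)^p := Real.rpow_nonneg hnpos.le p
      calc (C * a^(2*p-2) * (n:ℝ)^(p-1)) * ((n:ℝ)^p)
          ≤ ((3/8) * a^p) * ((n:ℝ)^p) := mul_le_mul_of_nonneg_right hpoly.le hnp
        _ = (3/8) * (a^p * (n:ℝ)^p) := by ring
        _ = (3/8) * b^p := by rw [← e4]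
    have h3 : Real.log (n:ℝ) ≤ (3/8) * b^p := by
      calc Real.log (n:ℝ) ≤ (3/8) * a^p * (n:ℝ)^p := hlog
        _ = (3/8) * (a^p * (n:ℝ)^p) := by ring
        _ = (3/8) * b^p := by rw [← e4]
    linarith
  have hT2' : (n:ℝ) * Real.exp (t^2*(C*(n:ℝ)) - t*((n:ℝ)*x)) ≤
      Real.exp (-(1/4 * b^p)) := by
    have : (n:ℝ) * Real.exp (t^2*(C*(n:ℝ)) - t*((n:ℝ)*x)) =
        Real.exp (Real.log (n:ℝ) + (t^2*(C*(n:ℝ)) - t*((n:ℝ)*x))) := by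
      rw [Real.exp_add, Real.exp_log hnpos]
    rw [this]
    exact Real.exp_le_exp.mpr hkey
  have hT1' : Real.exp (-(b^p)) ≤ Real.exp (-(1/4 * b^p)) := by
    apply Real.exp_le_exp.mpr
    nlinarith
  have hinv : (1:ℝ) ≤ (1 - α)⁻¹ := by
    have h1α : (0:ℝ) < 1 - α := by linarith
    have hmc : (1 - α) * (1 - α)⁻¹ = 1 := mul_inv_cancel₀ h1α.ne'
    nlinarith [inv_pos.mpr h1α]
  calc (μ {ω | ∃ k ∈ Finset.Icc 1 n, (n:ℝ)*x ≤ pSum X k ω}).toReal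
      ≤ (μ A).toReal + (μ B).toReal := hmain
    _ ≤ Real.exp (-(b^p)) + (n:ℝ) * Real.exp (t^2*(C*(n:ℝ)) - t*((n:ℝ)*x)) := by
        have := le_trans hμA hT1
        have := le_trans hμB hT2
        linarith
    _ ≤ 2 * Real.exp (-(1/4 * b^p)) := by linarith
    _ ≤ 2 * (1 - α)⁻¹ * Real.exp (-(1/4 * α ^ p * x ^ p * (n:ℝ) ^ p)) := by
        have heq : (1:ℝ)/4 * b^p = 1/4 * α ^ p * x ^ p * (n:ℝ) ^ p := by
          rw [hbp]; ring
        rw [← heq]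
        nlinarith [Real.exp_pos (-(1/4 * b^p))]
end
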